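/- Let G be a graph with a fixed vertex ordering and the associated ordering of the facets of NC(G) via the reverse lexicographic order on edges. For every face σ of NC(G), there exists a face σ' of NC(G) with mes(σ) = mes(σ') such that the induced subgraph of G on the complement of σ' is a disjoint union of a star K_{1,k} together with isolated vertices, where the center a of the star precedes all leaves in the vertex order. -/

import Mathlib

variable {V : Type*} [Fintype V] [LinearOrder V]

open Finset


/-- `W` dominates the set `A` in `G`: every vertex of `A` is in `W` or adjacent to a vertex of `W`. -/
def Dominates (G : SimpleGraph V) (W A : Finset V) : Prop :=
  ∀ a ∈ A, a ∈ W ∨ ∃ w ∈ W, G.Adj w a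

/-- `I` is an independent set of `G`. -/
def IndepSet (G : SimpleGraph V) (I : Finset V) : Prop :=
  ∀ u ∈ I, ∀ v ∈ I, ¬ G.Adj u v

instance (G : SimpleGraph V) [DecidableRel G.Adj] (I : Finset V) :
    Decidable (IndepSet G I) := by unfold IndepSet; infer_instance

/-- The domination number of `G`. -/
noncomputable def gamma (G : SimpleGraph V) : ℕ :=
  sInf {k | ∃ W : Finset V, W.card = k ∧ Dominates G W Finset.univ}

/-- The independence domination number of `G`. -/
noncomputable def igamma (G : SimpleGraph V) : ℕ :=
  sInf {k | ∀ I : Finset V, IndepSet G I → ∃ W : Finset V, W.card ≤ k ∧ Dominates G W I}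

/-- The noncover complex of `G`: faces are the vertex sets whose complement is not independent. -/
def NC (G : SimpleGraph V) [DecidableRel G.Adj] : Finset (Finset V) :=
  Finset.univ.filter fun W => ¬ IndepSet G Wᶜ

/-- The independence complex of `G`. -/
def IndComplex (G : SimpleGraph V) [DecidableRel G.Adj] : Finset (Finset V) :=
  Finset.univ.filter fun I => IndepSet G I

/-- The combinatorial Alexander dual of a complex on the full vertex set `V`. -/
def AlexDual (K : Finset (Finset V)) : Finset (Finset V) :=
  Finset.univ.filter fun s => sᶜ ∉ K

/-- `K` is a simplicial complex (downward closed family of finite sets). -/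
def IsComplex (K : Finset (Finset V)) : Prop :=
  ∀ σ ∈ K, ∀ τ ⊆ σ, τ ∈ K

/-- `s` is a maximal face (facet) of `K`. -/
def IsMaxFace (K : Finset (Finset V)) (s : Finset V) : Prop :=
  s ∈ K ∧ ∀ t ∈ K, s ⊆ t → t = s

/-- `σ` is a free face of `K`: a face contained in a unique maximal face. -/
def IsFreeFace (K : Finset (Finset V)) (σ : Finset V) : Prop :=
  σ ∈ K ∧ ∃ τ ∈ K, σ ⊆ τ ∧ ∀ ρ ∈ K, σ ⊆ ρ → ρ ⊆ τ

/-- `K'` is obtained from `K` by an elementary `d`-collapse. -/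
def ElemCollapse (d : ℕ) (K K' : Finset (Finset V)) : Prop :=
  ∃ σ : Finset V, IsFreeFace K σ ∧ σ.card ≤ d ∧ K' = K.filter fun ρ => ¬ σ ⊆ ρ

/-- `K` is `d`-collapsible. -/
def Collapsible (d : ℕ) (K : Finset (Finset V)) : Prop :=
  Relation.ReflTransGen (ElemCollapse d) K ∅

/-- chordality -/
def IsChordal (G : SimpleGraph V) : Prop :=
  ∀ (u : V) (c : G.Walk u u), c.IsCycle → 4 ≤ c.length →
    ∃ x ∈ c.support, ∃ y ∈ c.support, G.Adj x y ∧ s(x, y) ∉ c.edges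

/-- simplicial vertex -/
def IsSimplicialVtx (G : SimpleGraph V) (v : V) : Prop :=
  ∀ x y : V, G.Adj v x → G.Adj v y → x ≠ y → G.Adj x y


/-- Auxiliary recursion computing the first `j` entries of the minimal exclusion sequence of
the face `σ` with respect to the ordered list `facets 0, facets 1, …` of maximal faces. -/
def mesAux (σ : Finset V) (facets : ℕ → Finset V) : ℕ → List V
  | 0 => []
  | j + 1 =>
    let prev := mesAux σ facets j
    let A := σ \ facets j
    let B := A.filter fun v => v ∈ prev
    prev ++
      (if hB : B.Nonempty then [B.min' hB]
       else if hA : A.Nonempty then [A.min' hA] else [])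

open Classical in
/-- `i(σ)` (in 0-based indexing): the least `j` such that `σ ⊆ facets j`. -/
noncomputable def mesIdx (facets : ℕ → Finset V) (σ : Finset V) : ℕ :=
  if h : ∃ j, σ ⊆ facets j then Nat.find h else 0

/-- The minimal exclusion sequence `mes(σ)` of a face `σ`. -/
noncomputable def mes (facets : ℕ → Finset V) (σ : Finset V) : List V :=
  mesAux σ facets (mesIdx facets σ)

/-- `M(σ)`: the set of vertices appearing in `mes(σ)`. -/
noncomputable def mesSet (facets : ℕ → Finset V) (σ : Finset V) : Finset V :=
  (mes facets σ).toFinset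

/-- The ordered facets `σ₁, σ₂, …` of the noncover complex `NC G`: complements of the edges of
`G`, where the edges are listed in decreasing lexicographic order (induced by the vertex order). -/
noncomputable def ncFacets (G : SimpleGraph V) [DecidableRel G.Adj] : ℕ → Finset V :=
  fun j =>
    let L : List (Lex (V × V)) :=
      ((Finset.univ.filter fun p : Lex (V × V) =>
        G.Adj (ofLex p).1 (ofLex p).2 ∧ (ofLex p).1 < (ofLex p).2).sort (· ≤ ·)).reverse
    match L[j]? with
    | some p => ({(ofLex p).1, (ofLex p).2} : Finset V)ᶜ
    | none => ∅


/- ===== auxiliary lemmas ===== -/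

/-- The underlying ordered edge list used in `ncFacets`. -/
noncomputable def edgeL (G : SimpleGraph V) [DecidableRel G.Adj] : List (Lex (V × V)) :=
  ((Finset.univ.filter fun p : Lex (V × V) =>
    G.Adj (ofLex p).1 (ofLex p).2 ∧ (ofLex p).1 < (ofLex p).2).sort (· ≤ ·)).reverse

lemma ncFacets_def (G : SimpleGraph V) [DecidableRel G.Adj] (j : ℕ) :
    ncFacets G j = (match (edgeL G)[j]? with
      | some p => ({(ofLex p).1, (ofLex p).2} : Finset V)ᶜ
      | none => ∅) := rfl

lemma ncFacets_of_lt (G : SimpleGraph V) [DecidableRel G.Adj] {j : ℕ}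
    (h : j < (edgeL G).length) :
    ncFacets G j = ({(ofLex ((edgeL G)[j]'h)).1, (ofLex ((edgeL G)[j]'h)).2} : Finset V)ᶜ := by
  rw [ncFacets_def, List.getElem?_eq_getElem h]

lemma mem_edgeL (G : SimpleGraph V) [DecidableRel G.Adj] {p : Lex (V × V)} :
    p ∈ edgeL G ↔ G.Adj (ofLex p).1 (ofLex p).2 ∧ (ofLex p).1 < (ofLex p).2 := by
  unfold edgeL
  rw [List.mem_reverse, Finset.mem_sort, Finset.mem_filter]
  simp

lemma edgeL_anti (G : SimpleGraph V) [DecidableRel G.Adj] {j k : ℕ} (hjk : j < k)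
    (hk : k < (edgeL G).length) :
    (edgeL G)[k]'hk < (edgeL G)[j]'(hjk.trans hk) := by
  have hp : (edgeL G).Pairwise (fun a b => b < a) := by
    unfold edgeL
    rw [List.pairwise_reverse]
    have := (Finset.sortedLT_sort (Finset.univ.filter fun p : Lex (V × V) =>
        G.Adj (ofLex p).1 (ofLex p).2 ∧ (ofLex p).1 < (ofLex p).2)).pairwise
    exact this
  exact List.pairwise_iff_getElem.1 hp j k (hjk.trans hk) hk hjk

lemma exists_edge_index (G : SimpleGraph V) [DecidableRel G.Adj] {u v : V}
    (huv : G.Adj u v) (h : u < v) :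
    ∃ k, ∃ hk : k < (edgeL G).length, (edgeL G)[k]'hk = toLex (u, v) := by
  have hm : toLex (u, v) ∈ edgeL G := (mem_edgeL G).2 (by simpa using ⟨huv, h⟩)
  exact List.mem_iff_getElem.1 hm

lemma mesAux_insert (σ' : Finset V) (F : ℕ → Finset V) (x : V) :
    ∀ n, (∀ k < n, x ∈ F k) → mesAux (insert x σ') F n = mesAux σ' F n := by
  intro n
  induction n with
  | zero => intro _; rfl
  | succ j ih =>
    intro h
    have hj : x ∈ F j := h j (Nat.lt_succ_self j)
    simp only [mesAux]
    rw [ih (fun k hk => h k (hk.trans (Nat.lt_succ_self j))),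
        Finset.insert_sdiff_of_mem _ hj]

lemma mesIdx_subset (F : ℕ → Finset V) (σ : Finset V) (hex : ∃ j, σ ⊆ F j) :
    σ ⊆ F (mesIdx F σ) := by
  rw [mesIdx, dif_pos hex]
  exact Nat.find_spec hex

lemma mesIdx_le (F : ℕ → Finset V) (σ : Finset V) (hex : ∃ j, σ ⊆ F j) {j : ℕ}
    (h : σ ⊆ F j) : mesIdx F σ ≤ j := by
  rw [mesIdx, dif_pos hex]
  exact Nat.find_min' hex h

lemma mes_insert (F : ℕ → Finset V) (σ' : Finset V) (x : V)
    (hex : ∃ j, σ' ⊆ F j) (hx : ∀ k ≤ mesIdx F σ', x ∈ F k) :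
    mes F (insert x σ') = mes F σ' := by
  have hsub : insert x σ' ⊆ F (mesIdx F σ') :=
    Finset.insert_subset (hx _ le_rfl) (mesIdx_subset F σ' hex)
  have hex' : ∃ j, insert x σ' ⊆ F j := ⟨mesIdx F σ', hsub⟩
  have hidx : mesIdx F (insert x σ') = mesIdx F σ' := by
    apply le_antisymm
    · exact mesIdx_le F _ hex' hsub
    · exact mesIdx_le F _ hex
        ((Finset.subset_insert x σ').trans (mesIdx_subset F _ hex'))
  rw [mes, mes, hidx, mesAux_insert σ' F x _ (fun k hk => hx k hk.le)]


/-- For every face `σ` of `NC(G)` there is a face `σ'` with the same minimal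
exclusion sequence such that the complement of `σ'` induces the disjoint union of a star
(center `a`, leaves `B`, with `a` preceding all leaves) and isolated vertices `C`. -/
theorem mes_star_normal_form (G : SimpleGraph V) [DecidableRel G.Adj]
    (σ : Finset V) (hσ : σ ∈ NC G) :
    ∃ σ' ∈ NC G, mes (ncFacets G) σ = mes (ncFacets G) σ' ∧
      ∃ (a : V) (B C : Finset V),
        σ'ᶜ = insert a (B ∪ C) ∧ a ∉ B ∪ C ∧ Disjoint B C ∧ B.Nonempty ∧
        (∀ b ∈ B, G.Adj a b ∧ a < b) ∧
        (∀ b ∈ B, ∀ b' ∈ B, ¬ G.Adj b b') ∧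
        (∀ c ∈ C, ∀ x ∈ (σ'ᶜ : Finset V), ¬ G.Adj c x) := by
  classical
  set F := ncFacets G with hFdef
  obtain ⟨σ', hσ'S, hmax⟩ : ∃ i ∈ ((NC G).filter fun τ => mes F τ = mes F σ),
      ∀ x ∈ ((NC G).filter fun τ => mes F τ = mes F σ), ¬ i < x := by
    obtain ⟨i, hi⟩ := Finset.exists_maximal (s := (NC G).filter fun τ => mes F τ = mes F σ)
      ⟨σ, Finset.mem_filter.2 ⟨hσ, rfl⟩⟩
    exact ⟨i, hi.1, fun x hx h => lt_irrefl _ (h.trans_le (hi.2 hx h.le))⟩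
  rw [Finset.mem_filter] at hσ'S
  obtain ⟨hσ'NC, hmes⟩ := hσ'S
  have hnonindep : ¬ IndepSet G σ'ᶜ := (Finset.mem_filter.1 hσ'NC).2
  obtain ⟨u, hu, v, hv, huv⟩ : ∃ u ∈ σ'ᶜ, ∃ v ∈ σ'ᶜ, G.Adj u v := by
    by_contra hc; push_neg at hc; exact hnonindep fun u hu v hv => hc u hu v hv
  obtain ⟨u, hu, v, hv, huv, hlt⟩ :
      ∃ u ∈ σ'ᶜ, ∃ v ∈ σ'ᶜ, G.Adj u v ∧ u < v := by
    rcases lt_or_gt_of_ne huv.ne with h | h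
    · exact ⟨u, hu, v, hv, huv, h⟩
    · exact ⟨v, hv, u, hu, huv.symm, h⟩
  obtain ⟨k0, hk0, hk0eq⟩ := exists_edge_index G huv hlt
  have hsubk0 : σ' ⊆ F k0 := by
    rw [hFdef, ncFacets_of_lt G hk0, hk0eq]
    intro w hw
    simp only [ofLex_toLex, Finset.mem_compl, Finset.mem_insert, Finset.mem_singleton, not_or]
    exact ⟨fun h => (Finset.mem_compl.1 hu) (h ▸ hw), fun h => (Finset.mem_compl.1 hv) (h ▸ hw)⟩
  have hex : ∃ j, σ' ⊆ F j := ⟨k0, hsubk0⟩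
  set i := mesIdx F σ' with hidef
  have hsubi : σ' ⊆ F i := mesIdx_subset F σ' hex
  have hilt : i < (edgeL G).length := lt_of_le_of_lt (mesIdx_le F σ' hex hsubk0) hk0
  set q := (edgeL G)[i]'hilt with hqdef
  set a := (ofLex q).1 with hadef
  set b := (ofLex q).2 with hbdef
  have hqmem : q ∈ edgeL G := List.getElem_mem _
  have hqab : G.Adj a b ∧ a < b := (mem_edgeL G).1 hqmem
  have hFi : F i = ({a, b} : Finset V)ᶜ := by rw [hFdef, ncFacets_of_lt G hilt]
  have haσ : a ∉ σ' := by
    intro h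
    have := hsubi h
    rw [hFi] at this
    simp at this
  have hbσ : b ∉ σ' := by
    intro h
    have := hsubi h
    rw [hFi] at this
    simp at this
  have hgetcong : ∀ {k k' : ℕ} (hk : k < (edgeL G).length) (hk' : k' < (edgeL G).length),
      k = k' → (edgeL G)[k]'hk = (edgeL G)[k']'hk' := by
    rintro k k' hk hk' rfl; rfl
  have hL_le : ∀ k, k ≤ i → ∀ hk : k < (edgeL G).length, q ≤ (edgeL G)[k]'hk := by
    intro k hk hklen
    rcases hk.lt_or_eq with h | h
    · exact (edgeL_anti G h hilt).le
    · exact le_of_eq (by rw [hqdef]; exact hgetcong hilt hklen h.symm)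
  -- key: no vertex of the complement precedes a
  have key : ∀ x, x ∉ σ' → ¬ x < a := by
    intro x hxσ hxa
    have hxF : ∀ k ≤ i, x ∈ F k := by
      intro k hk
      have hklen : k < (edgeL G).length := lt_of_le_of_lt hk hilt
      have hle : q ≤ (edgeL G)[k]'hklen := hL_le k hk hklen
      obtain ⟨hadjk, hltk⟩ := (mem_edgeL G).1 (List.getElem_mem hklen)
      have hac : a ≤ (ofLex ((edgeL G)[k]'hklen)).1 := by
        rcases (Prod.Lex.le_iff (x := q) (y := (edgeL G)[k]'hklen)).1 hle with h | h
        · exact h.le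
        · exact le_of_eq h.1
      rw [hFdef, ncFacets_of_lt G hklen]
      simp only [Finset.mem_compl, Finset.mem_insert, Finset.mem_singleton, not_or]
      refine ⟨fun h => ?_, fun h => ?_⟩
      · rw [h] at hxa
        exact absurd (hxa.trans_le hac) (lt_irrefl _)
      · rw [h] at hxa
        exact absurd (hltk.trans (hxa.trans_le hac)) (lt_irrefl _)
    have hmes' : mes F (insert x σ') = mes F σ' := mes_insert F σ' x hex hxF
    have hxa' : x ≠ a := ne_of_lt hxa
    have hxb : x ≠ b := ne_of_lt (hxa.trans hqab.2)
    have hNC : insert x σ' ∈ NC G := by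
      simp only [NC, Finset.mem_filter, Finset.mem_univ, true_and]
      intro hind
      refine hind a ?_ b ?_ hqab.1
      · rw [Finset.compl_insert]
        exact Finset.mem_erase.2 ⟨Ne.symm hxa', Finset.mem_compl.2 haσ⟩
      · rw [Finset.compl_insert]
        exact Finset.mem_erase.2 ⟨Ne.symm hxb, Finset.mem_compl.2 hbσ⟩
    exact hmax _ (Finset.mem_filter.2 ⟨hNC, hmes'.trans hmes⟩) (Finset.ssubset_insert hxσ)
  -- every edge inside the complement emanates from a
  have hedge : ∀ y z : V, G.Adj y z → y < z → y ∉ σ' → z ∉ σ' → y = a ∧ z ≤ b := by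
    intro y z hyz hyzlt hyσ hzσ
    obtain ⟨k, hk, hkeq⟩ := exists_edge_index G hyz hyzlt
    have hsubk : σ' ⊆ F k := by
      rw [hFdef, ncFacets_of_lt G hk, hkeq]
      intro w hw
      simp only [ofLex_toLex, Finset.mem_compl, Finset.mem_insert, Finset.mem_singleton, not_or]
      exact ⟨fun h => hyσ (h ▸ hw), fun h => hzσ (h ▸ hw)⟩
    have hik : i ≤ k := mesIdx_le F σ' hex hsubk
    have hlek : (edgeL G)[k]'hk ≤ q := by
      rcases hik.lt_or_eq with h | h
      · exact (edgeL_anti G h hk).le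
      · exact le_of_eq (by rw [hqdef]; exact hgetcong hk hilt h.symm)
    rw [hkeq] at hlek
    have hlex := (Prod.Lex.le_iff (x := toLex (y, z)) (y := q)).1 hlek
    rcases hlex with h | h
    · exact absurd h (key y hyσ)
    · exact h
  refine ⟨σ', hσ'NC, hmes.symm, a, σ'ᶜ.filter (fun y => G.Adj a y ∧ a < y),
      σ'ᶜ \ insert a (σ'ᶜ.filter (fun y => G.Adj a y ∧ a < y)), ?_, ?_, ?_, ?_, ?_, ?_, ?_⟩
  · ext y
    simp only [Finset.mem_insert, Finset.mem_union, Finset.mem_filter, Finset.mem_sdiff,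
      Finset.mem_compl]
    constructor
    · intro hy
      rcases eq_or_ne y a with rfl | hne
      · exact Or.inl rfl
      · by_cases hp : G.Adj a y ∧ a < y
        · exact Or.inr (Or.inl ⟨hy, hp⟩)
        · exact Or.inr (Or.inr ⟨hy, fun h => by
            rcases h with h' | h'
            · exact hne h'
            · exact hp h'.2⟩)
    · rintro (rfl | ⟨hy, -⟩ | ⟨hy, -⟩)
      · exact haσ
      · exact hy
      · exact hy
  · simp only [Finset.mem_union, Finset.mem_filter, Finset.mem_sdiff, Finset.mem_compl, not_or]
    refine ⟨fun h => absurd h.2.2 (lt_irrefl a), fun h => h.2 (Finset.mem_insert_self a _)⟩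
  · exact Finset.disjoint_sdiff.mono_left (Finset.subset_insert a _)
  · exact ⟨b, Finset.mem_filter.2 ⟨Finset.mem_compl.2 hbσ, hqab.1, hqab.2⟩⟩
  · intro b' hb'
    exact (Finset.mem_filter.1 hb').2
  · intro b1 hb1 b2 hb2 hadj
    obtain ⟨hb1c, -, hab1⟩ := Finset.mem_filter.1 hb1
    obtain ⟨hb2c, -, hab2⟩ := Finset.mem_filter.1 hb2
    rcases lt_trichotomy b1 b2 with h | h | h
    · have := (hedge b1 b2 hadj h (Finset.mem_compl.1 hb1c) (Finset.mem_compl.1 hb2c)).1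
      rw [this] at hab1
      exact absurd hab1 (lt_irrefl a)
    · exact hadj.ne h
    · have := (hedge b2 b1 hadj.symm h (Finset.mem_compl.1 hb2c) (Finset.mem_compl.1 hb1c)).1
      rw [this] at hab2
      exact absurd hab2 (lt_irrefl a)
  · intro c hc x hx hadj
    obtain ⟨hcc, hcn⟩ := Finset.mem_sdiff.1 hc
    rcases lt_trichotomy c x with h | h | h
    · have hca := (hedge c x hadj h (Finset.mem_compl.1 hcc) (Finset.mem_compl.1 hx)).1
      subst hca
      exact hcn (Finset.mem_insert_self _ _)
    · exact hadj.ne h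
    · have hxa := (hedge x c hadj.symm h (Finset.mem_compl.1 hx) (Finset.mem_compl.1 hcc)).1
      refine hcn (Finset.mem_insert_of_mem (Finset.mem_filter.2 ⟨hcc, ?_, ?_⟩))
      · exact hxa ▸ hadj.symm
      · exact hxa ▸ h
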